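/- Let V be a finite-dimensional ℂ-vector space with a non-degenerate bilinear form Q, and let N be a nilpotent endomorphism of V acting by infinitesimal isometries of Q (i.e. Q(Nu, v) + Q(u, Nv) = 0). Then the monodromy weight filtration of N is self-dual with respect to Q: W_j(N) = W_{-j-1}(N)^⊥ for all j. -/
import Mathlib


variable {V : Type*} [AddCommGroup V] [Module ℂ V]

def IsMonodromyWeightFiltration (N : Module.End ℂ V) (W : ℤ → Submodule ℂ V) : Prop :=
  Monotone W ∧
  (∃ d : ℕ, (∀ j : ℤ, j < -(d : ℤ) → W j = ⊥) ∧ (∀ j : ℤ, (d : ℤ) ≤ j → W j = ⊤)) ∧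
  (∀ j : ℤ, (W j).map N ≤ W (j - 2)) ∧
  (∀ j : ℕ, ∀ v ∈ W (j : ℤ), (N ^ j) v ∈ W (-(j : ℤ) - 1) → v ∈ W ((j : ℤ) - 1)) ∧
  (∀ j : ℕ, ∀ v ∈ W (-(j : ℤ)), ∃ u ∈ W (j : ℤ), (N ^ j) u - v ∈ W (-(j : ℤ) - 1))

open Module

/-- Dimension of the (left) orthogonal complement of a submodule with respect to a
nondegenerate bilinear form (no reflexivity assumed). -/
lemma finrank_orthogonal_add_finrank [FiniteDimensional ℂ V]
    (Q : LinearMap.BilinForm ℂ V) (hQ : Q.Nondegenerate) (M : Submodule ℂ V) :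
    finrank ℂ (Q.orthogonal M) + finrank ℂ M = finrank ℂ V := by
  classical
  let e : V ≃ₗ[ℂ] Module.Dual ℂ V := Q.flip.toDual hQ.flip
  have horth : Q.orthogonal M = M.dualAnnihilator.comap e.toLinearMap := by
    ext v
    simp only [LinearMap.BilinForm.mem_orthogonal_iff, Submodule.mem_comap,
      Submodule.mem_dualAnnihilator, LinearEquiv.coe_coe]
    constructor
    · intro h n hn; exact h n hn
    · intro h n hn; exact h n hn
  rw [horth, Submodule.comap_equiv_eq_map_symm]
  rw [LinearEquiv.finrank_map_eq]
  have h1 := LinearEquiv.finrank_eq (Subspace.quotEquivAnnihilator M)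
  have h2 := Submodule.finrank_quotient_add_finrank M
  omega

/-- If `N` is a nilpotent infinitesimal isometry of a non-degenerate bilinear form
`Q`, then the monodromy weight filtration of `N` is self-dual:
`W j = W (-j-1)^⊥`. -/
theorem monodromy_weight_filtration_self_dual
    [FiniteDimensional ℂ V] (Q : LinearMap.BilinForm ℂ V)
    (hQ : Q.Nondegenerate) (N : Module.End ℂ V) (hnil : IsNilpotent N)
    (hiso : ∀ u v : V, Q (N u) v + Q u (N v) = 0)
    (W : ℤ → Submodule ℂ V) (hW : IsMonodromyWeightFiltration N W) :
    ∀ j : ℤ, W j = LinearMap.BilinForm.orthogonal Q (W (-j - 1)) := by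
  obtain ⟨hmono, ⟨d, hbot, htop⟩, hshift, hinj, hsurj⟩ := hW
  -- powers of N shift the filtration
  have hpow : ∀ (p : ℕ) (j : ℤ), ∀ v ∈ W j, (N ^ p) v ∈ W (j - 2 * p) := by
    intro p
    induction p with
    | zero => intro j v hv; simpa using hv
    | succ p ih =>
      intro j v hv
      have h1 : N ((N ^ p) v) ∈ W (j - 2 * p - 2) :=
        hshift (j - 2 * p) (Submodule.mem_map_of_mem (ih j v hv))
      have h2 : (N ^ (p + 1)) v = N ((N ^ p) v) := by rw [pow_succ']; rfl
      have h3 : j - 2 * (p : ℤ) - 2 = j - 2 * ((p : ℕ) + 1 : ℕ) := by push_cast; ring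
      rw [h2, ← h3]; exact h1
  -- the sign rule for moving powers of N across Q
  have hsign : ∀ (p : ℕ) (u v : V), Q ((N ^ p) u) v = (-1 : ℂ) ^ p * Q u ((N ^ p) v) := by
    intro p
    induction p with
    | zero => intro u v; simp
    | succ p ih =>
      intro u v
      have h2 : (N ^ (p + 1)) u = (N ^ p) (N u) := by rw [pow_succ]; rfl
      have h3 : N ((N ^ p) v) = (N ^ (p + 1)) v := by rw [pow_succ']; rfl
      have h4 : Q (N u) ((N ^ p) v) = - Q u (N ((N ^ p) v)) :=
        eq_neg_of_add_eq_zero_left (hiso u ((N ^ p) v))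
      rw [h2, ih (N u) v, h4, h3, pow_succ]
      ring
  -- key vanishing lemma : Q (W a) (W b) = 0 whenever a + b < 0
  have key : ∀ (n : ℕ) (a b : ℤ), a + b < 0 →
      (a + b + min a b + 3 * (d : ℤ) + 3).toNat < n →
      ∀ u ∈ W a, ∀ v ∈ W b, Q u v = 0 := by
    intro n
    induction n with
    | zero => intro a b _ h; omega
    | succ n ih =>
      intro a b hab hn u hu v hv
      by_cases hlow : min a b ≤ -(d : ℤ) - 1
      · rcases le_total a b with h | h
        · have hWa : W a = ⊥ := hbot a (by omega)
          rw [hWa, Submodule.mem_bot] at hu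
          simp [hu]
        · have hWb : W b = ⊥ := hbot b (by omega)
          rw [hWb, Submodule.mem_bot] at hv
          simp [hv]
      · push_neg at hlow
        rcases le_or_gt b (-1) with hb | hb
        · -- reduce on the right
          set m : ℕ := (-b).toNat with hm
          have hmz : -(m : ℤ) = b := by omega
          obtain ⟨w, hw, hr⟩ := hsurj m v (by rw [hmz]; exact hv)
          have t1 : Q ((N ^ m) u) w = 0 := by
            refine ih (a - 2 * m) (m : ℤ) (by omega) (by omega) _ (hpow m a u hu) w hw
          have t1b : Q u ((N ^ m) w) = 0 := by
            have h := hsign m u w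
            rw [t1] at h
            have hne : ((-1 : ℂ) ^ m) ≠ 0 := pow_ne_zero _ (by norm_num)
            exact (mul_eq_zero.mp h.symm).resolve_left hne
          have t2 : Q u ((N ^ m) w - v) = 0 := by
            refine ih a (b - 1) (by omega) (by omega) u hu _ ?_
            have he : -(m : ℤ) - 1 = b - 1 := by omega
            rw [← he]; exact hr
          have hsplit : Q u v = Q u ((N ^ m) w) - Q u ((N ^ m) w - v) := by
            rw [map_sub]; ring
          rw [hsplit, t1b, t2, sub_zero]
        · -- b ≥ 0, so a ≤ -1 : reduce on the left
          set m : ℕ := (-a).toNat with hm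
          have hmz : -(m : ℤ) = a := by omega
          obtain ⟨w, hw, hr⟩ := hsurj m u (by rw [hmz]; exact hu)
          have t1 : Q w ((N ^ m) v) = 0 := by
            refine ih (m : ℤ) (b - 2 * m) (by omega) (by omega) w hw _ (hpow m b v hv)
          have t2 : Q ((N ^ m) w - u) v = 0 := by
            refine ih (a - 1) b (by omega) (by omega) _ ?_ v hv
            have he : -(m : ℤ) - 1 = a - 1 := by omega
            rw [← he]; exact hr
          have hsplit : Q u v = Q ((N ^ m) w) v - Q ((N ^ m) w - u) v := by
            rw [map_sub, LinearMap.sub_apply]; ring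
          rw [hsplit, hsign m w v, t1, t2, mul_zero, sub_zero]
  -- graded pieces
  have hquot : ∀ k : ℤ,
      finrank ℂ (↥(W k) ⧸ (Submodule.comap (W k).subtype (W (k - 1)))) +
        finrank ℂ (W (k - 1)) = finrank ℂ (W k) := by
    intro k
    have h1 := Submodule.finrank_quotient_add_finrank
      (Submodule.comap (W k).subtype (W (k - 1)))
    have h2 := LinearEquiv.finrank_eq
      (Submodule.comapSubtypeEquivOfLe (p := W (k - 1)) (q := W k)
        (hmono (show k - 1 ≤ k by omega)))
    omega
  -- N^m induces an isomorphism of graded pieces Gr_m ≅ Gr_{-m}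
  have hgr : ∀ m : ℕ,
      finrank ℂ (↥(W (m : ℤ)) ⧸ (Submodule.comap (W (m : ℤ)).subtype (W ((m : ℤ) - 1)))) =
      finrank ℂ (↥(W (-(m : ℤ))) ⧸ (Submodule.comap (W (-(m : ℤ))).subtype (W (-(m : ℤ) - 1)))) := by
    intro m
    set A : Submodule ℂ ↥(W (m : ℤ)) :=
      Submodule.comap (W (m : ℤ)).subtype (W ((m : ℤ) - 1)) with hA
    set B : Submodule ℂ ↥(W (-(m : ℤ))) :=
      Submodule.comap (W (-(m : ℤ))).subtype (W (-(m : ℤ) - 1)) with hB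
    have hres : ∀ x ∈ W (m : ℤ), (N ^ m) x ∈ W (-(m : ℤ)) := by
      intro x hx
      have h := hpow m (m : ℤ) x hx
      have he : (m : ℤ) - 2 * (m : ℕ) = -(m : ℤ) := by push_cast; ring
      rwa [he] at h
    set g : ↥(W (m : ℤ)) →ₗ[ℂ] ↥(W (-(m : ℤ))) ⧸ B :=
      B.mkQ.comp ((N ^ m).restrict hres) with hg
    have hker : A ≤ LinearMap.ker g := by
      intro x hx
      have hx' : (x : V) ∈ W ((m : ℤ) - 1) := hx
      have h1 : (N ^ m) (x : V) ∈ W (-(m : ℤ) - 1) := by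
        have h := hpow m ((m : ℤ) - 1) x hx'
        have he : (m : ℤ) - 1 - 2 * (m : ℕ) = -(m : ℤ) - 1 := by push_cast; ring
        rwa [he] at h
      simp only [LinearMap.mem_ker, hg, LinearMap.comp_apply, Submodule.mkQ_apply,
        Submodule.Quotient.mk_eq_zero]
      rw [hB, Submodule.mem_comap]
      simpa [LinearMap.restrict_coe_apply] using h1
    have hinj' : Function.Injective (A.liftQ g hker) := by
      rw [← LinearMap.ker_eq_bot, LinearMap.ker_eq_bot']
      intro xq hxq
      obtain ⟨x, rfl⟩ := A.mkQ_surjective xq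
      have hgx : g x = 0 := by simpa using hxq
      have h2 : (N ^ m).restrict hres x ∈ B := by
        simpa [hg, Submodule.Quotient.mk_eq_zero] using hgx
      have h3 : (N ^ m) (x : V) ∈ W (-(m : ℤ) - 1) := by
        rw [hB, Submodule.mem_comap] at h2
        simpa [LinearMap.restrict_coe_apply] using h2
      have h4 : (x : V) ∈ W ((m : ℤ) - 1) := hinj m x x.2 h3
      rw [Submodule.mkQ_apply, Submodule.Quotient.mk_eq_zero]
      exact h4
    have hsurj' : Function.Surjective (A.liftQ g hker) := by
      intro zq
      obtain ⟨z, rfl⟩ := B.mkQ_surjective zq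
      obtain ⟨u, hu, hru⟩ := hsurj m (z : V) z.2
      refine ⟨A.mkQ ⟨u, hu⟩, ?_⟩
      rw [Submodule.mkQ_apply, Submodule.liftQ_apply]
      show B.mkQ ((N ^ m).restrict hres ⟨u, hu⟩) = B.mkQ z
      rw [Submodule.mkQ_apply, Submodule.mkQ_apply, Submodule.Quotient.eq]
      rw [hB, Submodule.mem_comap]
      simpa [LinearMap.restrict_coe_apply] using hru
    exact LinearEquiv.finrank_eq (LinearEquiv.ofBijective (A.liftQ g hker) ⟨hinj', hsurj'⟩)
  -- dimension identity : dim W j + dim W (-j-1) = dim V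
  have hstep : ∀ j : ℤ, finrank ℂ (W j) + finrank ℂ (W (-j - 1)) =
      finrank ℂ (W (j - 1)) + finrank ℂ (W (-(j - 1) - 1)) := by
    intro j
    have h1 := hquot j
    have h2 := hquot (-j)
    have h3 : finrank ℂ (↥(W j) ⧸ (Submodule.comap (W j).subtype (W (j - 1)))) =
        finrank ℂ (↥(W (-j)) ⧸ (Submodule.comap (W (-j)).subtype (W (-j - 1)))) := by
      rcases le_or_gt 0 j with hj | hj
      · have hcast : ((j.toNat : ℤ)) = j := by omega
        have h := hgr j.toNat
        rw [hcast] at h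
        exact h
      · have hcast : (((-j).toNat : ℤ)) = -j := by omega
        have h := hgr (-j).toNat
        rw [hcast] at h
        rw [neg_neg] at h
        exact h.symm
    have he : -(j - 1) - 1 = -j := by ring
    rw [he]
    omega
  have hdim : ∀ j : ℤ, finrank ℂ (W j) + finrank ℂ (W (-j - 1)) = finrank ℂ V := by
    have hbase : ∀ j : ℤ, j ≤ -(d : ℤ) - 1 →
        finrank ℂ (W j) + finrank ℂ (W (-j - 1)) = finrank ℂ V := by
      intro j hj
      have h1 : W j = ⊥ := hbot j (by omega)
      have h2 : W (-j - 1) = ⊤ := htop (-j - 1) (by omega)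
      rw [h1, h2, finrank_bot, finrank_top]
      omega
    have hup : ∀ j : ℤ, -(d : ℤ) - 1 ≤ j →
        finrank ℂ (W j) + finrank ℂ (W (-j - 1)) = finrank ℂ V := by
      refine Int.le_induction (hbase _ le_rfl) (fun j _ ih => ?_)
      have h := hstep (j + 1)
      have he : j + 1 - 1 = j := by ring
      rw [he] at h
      rw [h]
      exact ih
    intro j
    rcases le_or_gt j (-(d : ℤ) - 1) with h | h
    · exact hbase j h
    · exact hup j (by omega)
  -- conclusion
  intro j
  have hle : W j ≤ LinearMap.BilinForm.orthogonal Q (W (-j - 1)) := by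
    intro v hv u hu
    show Q u v = 0
    exact key ((-j - 1 + j + min (-j - 1) j + 3 * (d : ℤ) + 3).toNat + 1) (-j - 1) j
      (by omega) (by omega) u hu v hv
  have h2 := finrank_orthogonal_add_finrank Q hQ (W (-j - 1))
  have h3 := hdim j
  exact Submodule.eq_of_le_of_finrank_le hle (by omega)
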